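/- For m ≥ 2, let n be a positive integer. Every m-ary partition without gaps of n can be written uniquely in the form (⌊n/m^r⌋ − β_r, α_{r-1} − β_{r-1} + m·β_r, ..., α_1 − β_1 + m·β_2, α_0 + m·β_1) for some 0 ≤ r ≤ j and integers β_r,...,β_1 such that all displayed entries are strictly positive, where (α_j,...,α_0) is the base m representation of n. In particular c_m(n) equals the number of such tuples (r; β_r,...,β_1). -/

import Mathlib

noncomputable def cm (m n : ℕ) : ℕ :=
  Nat.card {f : ℕ →₀ ℕ // (∑ i ∈ f.support, f i * m ^ i = n) ∧
    ∀ i k, f i ≠ 0 → k ≤ i → f k ≠ 0}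

namespace GaplessAux

variable {m n j : ℕ} {α : ℕ → ℕ}

lemma digit_lt (hm : 2 ≤ m) {r : ℕ} (hd : ∀ i, i < r → α i < m) :
    ∑ i ∈ Finset.range r, α i * m ^ i < m ^ r := by
  induction r with
  | zero => simp
  | succ r ih =>
    rw [Finset.sum_range_succ, pow_succ]
    have h1 := ih (fun i hi => hd i (hi.trans r.lt_succ_self))
    have h2 : α r * m ^ r ≤ (m - 1) * m ^ r :=
      Nat.mul_le_mul_right _ (by have := hd r r.lt_succ_self; omega)
    have h3 : m ^ r + (m - 1) * m ^ r = m ^ r * m := by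
      obtain ⟨k, hk⟩ : ∃ k, m = k + 1 := ⟨m - 1, by omega⟩
      rw [hk]; simp [Nat.add_sub_cancel]; ring
    omega

lemma div_mod (hm : 2 ≤ m) (hd : ∀ i, i ≤ j → α i < m)
    (hn : n = ∑ i ∈ Finset.range (j + 1), α i * m ^ i) {r : ℕ} (hr : r ≤ j) :
    n % m ^ r = ∑ i ∈ Finset.range r, α i * m ^ i ∧
    n / m ^ r = ∑ i ∈ Finset.Icc r j, α i * m ^ (i - r) := by
  have hA : ∑ i ∈ Finset.range r, α i * m ^ i < m ^ r :=
    digit_lt hm (fun i hi => hd i (by omega))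
  have hsplit : n = (∑ i ∈ Finset.range r, α i * m ^ i)
      + m ^ r * ∑ i ∈ Finset.Icc r j, α i * m ^ (i - r) := by
    have h1 : Finset.Icc r j = Finset.Ico r (j + 1) := by rw [Finset.Ico_add_one_right_eq_Icc]
    rw [hn, Finset.range_eq_Ico,
      ← Finset.sum_Ico_consecutive _ (Nat.zero_le r) (by omega : r ≤ j + 1),
      ← Finset.range_eq_Ico, h1]
    congr 1
    rw [Finset.mul_sum]
    refine Finset.sum_congr rfl fun i hi => ?_
    have hri : r ≤ i := (Finset.mem_Ico.mp hi).1
    have hp : m ^ i = m ^ r * m ^ (i - r) := by rw [← pow_add]; congr 1; omega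
    rw [hp]; ring
  constructor
  · rw [hsplit, Nat.add_mul_mod_self_left, Nat.mod_eq_of_lt hA]
  · rw [hsplit, Nat.add_mul_div_left _ _ (pow_pos (by omega : 0 < m) r),
      Nat.div_eq_of_lt hA, Nat.zero_add]

lemma r_le_j (hm : 2 ≤ m) (hd : ∀ i, i ≤ j → α i < m)
    (hn : n = ∑ i ∈ Finset.range (j + 1), α i * m ^ i) {l : ℕ → ℕ} {r : ℕ} (hlr : 0 < l r)
    (hls : ∑ i ∈ Finset.range (r + 1), l i * m ^ i = n) : r ≤ j := by
  have h1 : m ^ r ≤ n := by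
    calc m ^ r ≤ l r * m ^ r := Nat.le_mul_of_pos_left _ hlr
    _ ≤ ∑ i ∈ Finset.range (r+1), l i * m ^ i :=
        Finset.single_le_sum (f := fun i => l i * m ^ i) (fun i _ => Nat.zero_le _)
          (Finset.self_mem_range_succ r)
    _ = n := hls
  have h2 : n < m ^ (j + 1) := by rw [hn]; exact digit_lt hm (fun i hi => hd i (by omega))
  by_contra h
  exact absurd (h1.trans_lt h2) (not_lt.mpr (Nat.pow_le_pow_right (by omega) (by omega)))

lemma sum_Icc_bot {M : Type*} [AddCommMonoid M] {a b : ℕ} (h : a ≤ b) (f : ℕ → M) :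
    ∑ i ∈ Finset.Icc a b, f i = f a + ∑ i ∈ Finset.Icc (a+1) b, f i := by
  have he : Finset.Icc a b = insert a (Finset.Icc (a+1) b) := by
    ext x; simp only [Finset.mem_Icc, Finset.mem_insert]; omega
  rw [he, Finset.sum_insert (by simp)]

lemma mul_sum_Icc {a : ℕ} (b : ℕ) (ha : 1 ≤ a) (g : ℕ → ℤ) :
    (m:ℤ) * ∑ i ∈ Finset.Icc a b, g i * (m:ℤ) ^ (i - a) =
      ∑ i ∈ Finset.Icc a b, g i * (m:ℤ) ^ (i - (a-1)) := by
  rw [Finset.mul_sum]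
  refine Finset.sum_congr rfl fun i hi => ?_
  have h1 : i - (a - 1) = (i - a) + 1 := by have := (Finset.mem_Icc.mp hi).1; omega
  rw [h1, pow_succ]; ring

noncomputable def B (m j : ℕ) (α : ℕ → ℕ) (l : ℕ → ℕ) (r : ℕ) (t : ℕ) : ℤ :=
  if 1 ≤ t ∧ t ≤ r then
    (∑ i ∈ Finset.Icc t j, (α i : ℤ) * (m:ℤ) ^ (i - t))
      - ∑ i ∈ Finset.Icc t r, (l i : ℤ) * (m:ℤ) ^ (i - t)
  else 0

lemma B_zero (l : ℕ → ℕ) (r : ℕ) : ∀ t, t = 0 ∨ r < t → B m j α l r t = 0 := by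
  intro t ht
  rw [B, if_neg (by omega)]

lemma B_spec (hm : 2 ≤ m) (hd : ∀ i, i ≤ j → α i < m)
    (hn : n = ∑ i ∈ Finset.range (j + 1), α i * m ^ i)
    {l : ℕ → ℕ} {r : ℕ}
    (hls : ∑ i ∈ Finset.range (r + 1), l i * m ^ i = n) (hr : r ≤ j) :
    ((l r : ℤ) = ((n / m ^ r : ℕ) : ℤ) - B m j α l r r) ∧
    (∀ t, 1 ≤ t → t < r → (l t : ℤ) = (α t : ℤ) - B m j α l r t + (m : ℤ) * B m j α l r (t + 1)) ∧
    (0 < r → (l 0 : ℤ) = (α 0 : ℤ) + (m : ℤ) * B m j α l r 1) := by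
  have hdiv := (div_mod hm hd hn hr).2
  have hcastdiv : ((n / m ^ r : ℕ) : ℤ) = ∑ i ∈ Finset.Icc r j, (α i : ℤ) * (m:ℤ) ^ (i - r) := by
    rw [hdiv]; push_cast; rfl
  refine ⟨?_, ?_, ?_⟩
  · rcases Nat.eq_zero_or_pos r with h0 | hp
    · subst h0
      rw [B_zero l 0 0 (Or.inl rfl)]
      have h : l 0 = n := by rw [← hls]; simp
      rw [h]; simp
    · rw [B, if_pos ⟨hp, le_refl r⟩, hcastdiv, Finset.Icc_self, Finset.sum_singleton]
      simp only [Nat.sub_self, pow_zero, mul_one]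
      ring
  · intro t ht1 htr
    rw [B, if_pos ⟨ht1, by omega⟩, B, if_pos ⟨by omega, by omega⟩, mul_sub,
      mul_sum_Icc j (by omega), mul_sum_Icc r (by omega)]
    simp only [Nat.add_sub_cancel]
    rw [sum_Icc_bot (by omega : t ≤ j) (fun i => (α i : ℤ) * (m:ℤ) ^ (i - t)),
      sum_Icc_bot (by omega : t ≤ r) (fun i => (l i : ℤ) * (m:ℤ) ^ (i - t))]
    simp only [Nat.sub_self, pow_zero, mul_one]
    ring
  · intro hp
    rw [B, if_pos ⟨le_refl 1, hp⟩, mul_sub, mul_sum_Icc j (le_refl 1), mul_sum_Icc r (le_refl 1)]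
    norm_num
    have h1 : (n : ℤ) = (α 0 : ℤ) + ∑ i ∈ Finset.Icc 1 j, (α i : ℤ) * (m:ℤ) ^ i := by
      have h : (n : ℤ) = ∑ i ∈ Finset.range (j + 1), (α i : ℤ) * (m:ℤ) ^ i := by
        rw [hn]; push_cast; rfl
      rw [h, Finset.range_eq_Ico, Finset.Ico_add_one_right_eq_Icc,
        sum_Icc_bot (Nat.zero_le j) (fun i => (α i : ℤ) * (m:ℤ) ^ i)]
      simp
    have h2 : (n : ℤ) = (l 0 : ℤ) + ∑ i ∈ Finset.Icc 1 r, (l i : ℤ) * (m:ℤ) ^ i := by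
      have h : (n : ℤ) = ∑ i ∈ Finset.range (r + 1), (l i : ℤ) * (m:ℤ) ^ i := by
        rw [← hls]; push_cast; rfl
      rw [h, Finset.range_eq_Ico, Finset.Ico_add_one_right_eq_Icc,
        sum_Icc_bot (Nat.zero_le r) (fun i => (l i : ℤ) * (m:ℤ) ^ i)]
      simp
    linarith

lemma beta_unique (hm : 2 ≤ m) {l : ℕ → ℕ} {r : ℕ} {β β' : ℕ → ℤ}
    (hz : ∀ t, t = 0 ∨ r < t → β t = 0)
    (he : ∀ t, 1 ≤ t → t < r → (l t : ℤ) = (α t : ℤ) - β t + (m : ℤ) * β (t + 1))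
    (h0 : 0 < r → (l 0 : ℤ) = (α 0 : ℤ) + (m : ℤ) * β 1)
    (hz' : ∀ t, t = 0 ∨ r < t → β' t = 0)
    (he' : ∀ t, 1 ≤ t → t < r → (l t : ℤ) = (α t : ℤ) - β' t + (m : ℤ) * β' (t + 1))
    (h0' : 0 < r → (l 0 : ℤ) = (α 0 : ℤ) + (m : ℤ) * β' 1) : β = β' := by
  have hm0 : (m : ℤ) ≠ 0 := by
    have : (0:ℤ) < (m:ℤ) := by exact_mod_cast (by omega : 0 < m)
    omega
  funext t
  induction t with
  | zero => rw [hz 0 (Or.inl rfl), hz' 0 (Or.inl rfl)]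
  | succ t ih =>
    by_cases hrt : r < t + 1
    · rw [hz _ (Or.inr hrt), hz' _ (Or.inr hrt)]
    · rcases Nat.eq_zero_or_pos t with h | hp
      · subst h
        have e1 := h0 (by omega)
        have e2 := h0' (by omega)
        exact mul_left_cancel₀ hm0 (by linarith)
      · have e1 := he t hp (by omega)
        have e2 := he' t hp (by omega)
        exact mul_left_cancel₀ hm0 (by linarith [ih])

noncomputable def rnk (f : ℕ →₀ ℕ) : ℕ := f.support.sup id

lemma le_rnk {f : ℕ →₀ ℕ} {i : ℕ} (h : i ∈ f.support) : i ≤ rnk f :=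
  Finset.le_sup (f := id) h

lemma rnk_mem {f : ℕ →₀ ℕ} (hne : f.support.Nonempty) : rnk f ∈ f.support := by
  obtain ⟨b, hb, hbe⟩ := Finset.exists_mem_eq_sup' hne id
  rw [rnk, ← Finset.sup'_eq_sup hne, hbe]
  exact hb

lemma S1_facts (hn0 : n ≠ 0) {f : ℕ →₀ ℕ} (hf1 : ∑ i ∈ f.support, f i * m ^ i = n)
    (hf2 : ∀ i k, f i ≠ 0 → k ≤ i → f k ≠ 0) :
    (∀ i, i ≤ rnk f → 0 < f i) ∧ (∀ i, rnk f < i → f i = 0) ∧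
    (∑ i ∈ Finset.range (rnk f + 1), f i * m ^ i = n) := by
  have hne : f.support.Nonempty := by
    rcases Finset.eq_empty_or_nonempty f.support with h | h
    · rw [h] at hf1; simp at hf1; exact absurd hf1.symm hn0
    · exact h
  have hrpos : f (rnk f) ≠ 0 := Finsupp.mem_support_iff.mp (rnk_mem hne)
  refine ⟨fun i hi => Nat.pos_of_ne_zero (hf2 _ i hrpos hi), fun i hi => ?_, ?_⟩
  · by_contra h
    exact absurd (le_rnk (Finsupp.mem_support_iff.mpr h)) (by omega)
  · rw [← hf1]
    refine (Finset.sum_subset ?_ ?_).symm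
    · intro x hx; exact Finset.mem_range.mpr (Nat.lt_succ_of_le (le_rnk hx))
    · intro x _ hx
      rw [Finsupp.notMem_support_iff.mp hx, zero_mul]

noncomputable def Fmap (m j : ℕ) (α : ℕ → ℕ) (f : ℕ →₀ ℕ) : ℕ × (ℕ → ℤ) :=
  (rnk f, B m j α f (rnk f))

lemma Fmap_prop (hm : 2 ≤ m) (hd : ∀ i, i ≤ j → α i < m)
    (hn : n = ∑ i ∈ Finset.range (j + 1), α i * m ^ i) (hn0 : n ≠ 0)
    {f : ℕ →₀ ℕ} (hf1 : ∑ i ∈ f.support, f i * m ^ i = n)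
    (hf2 : ∀ i k, f i ≠ 0 → k ≤ i → f k ≠ 0) :
    rnk f ≤ j ∧ (∀ t, t = 0 ∨ rnk f < t → B m j α f (rnk f) t = 0) ∧
    0 < ((n / m ^ (rnk f) : ℕ) : ℤ) - B m j α f (rnk f) (rnk f) ∧
    (∀ t, 1 ≤ t → t < rnk f → 0 < (α t : ℤ) - B m j α f (rnk f) t + (m : ℤ) * B m j α f (rnk f) (t + 1)) ∧
    (0 < rnk f → 0 < (α 0 : ℤ) + (m : ℤ) * B m j α f (rnk f) 1) := by
  obtain ⟨hpos, hzero, hsum⟩ := S1_facts hn0 hf1 hf2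
  have hrj : rnk f ≤ j := r_le_j hm hd hn (hpos _ le_rfl) hsum
  obtain ⟨e1, e2, e3⟩ := B_spec hm hd hn hsum hrj
  have c : ∀ i, i ≤ rnk f → (0:ℤ) < (f i : ℤ) := fun i hi => by exact_mod_cast hpos i hi
  refine ⟨hrj, B_zero _ _, ?_, fun t h1 h2 => ?_, fun h => ?_⟩
  · rw [← e1]; exact c _ le_rfl
  · rw [← e2 t h1 h2]; exact c t (by omega)
  · rw [← e3 h]; exact c 0 (by omega)

lemma Fmap_inj (hm : 2 ≤ m) (hd : ∀ i, i ≤ j → α i < m)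
    (hn : n = ∑ i ∈ Finset.range (j + 1), α i * m ^ i) (hn0 : n ≠ 0)
    {f1 f2 : ℕ →₀ ℕ}
    (hf11 : ∑ i ∈ f1.support, f1 i * m ^ i = n) (hf12 : ∀ i k, f1 i ≠ 0 → k ≤ i → f1 k ≠ 0)
    (hf21 : ∑ i ∈ f2.support, f2 i * m ^ i = n) (hf22 : ∀ i k, f2 i ≠ 0 → k ≤ i → f2 k ≠ 0)
    (hr : rnk f1 = rnk f2) (hB : B m j α f1 (rnk f1) = B m j α f2 (rnk f2)) : f1 = f2 := by
  obtain ⟨hp1, hz1, hs1⟩ := S1_facts hn0 hf11 hf12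
  obtain ⟨hp2, hz2, hs2⟩ := S1_facts hn0 hf21 hf22
  rw [← hr] at hp2 hz2 hs2 hB
  set r := rnk f1 with hrdef
  have hrj : r ≤ j := r_le_j hm hd hn (hp1 _ le_rfl) hs1
  obtain ⟨e11, e12, e13⟩ := B_spec hm hd hn hs1 hrj
  obtain ⟨e21, e22, e23⟩ := B_spec hm hd hn hs2 hrj
  ext t
  by_cases h : r < t
  · rw [hz1 t h, hz2 t h]
  · push_neg at h
    rcases eq_or_lt_of_le h with he | hlt
    · have : (f1 t : ℤ) = (f2 t : ℤ) := by rw [he, e11, e21, hB]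
      exact_mod_cast this
    · rcases Nat.eq_zero_or_pos t with h0 | hp
      · subst h0
        have : (f1 0 : ℤ) = (f2 0 : ℤ) := by rw [e13 hlt, e23 hlt, hB]
        exact_mod_cast this
      · have : (f1 t : ℤ) = (f2 t : ℤ) := by rw [e12 t hp hlt, e22 t hp hlt, hB]
        exact_mod_cast this

noncomputable def Lf (m n : ℕ) (α : ℕ → ℕ) (r : ℕ) (β : ℕ → ℤ) (t : ℕ) : ℕ :=
  if t = r then (((n / m ^ r : ℕ) : ℤ) - β r).toNat
  else if r < t then 0
  else if t = 0 then ((α 0 : ℤ) + (m:ℤ) * β 1).toNat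
  else ((α t : ℤ) - β t + (m:ℤ) * β (t + 1)).toNat

lemma Lf_facts (hm : 2 ≤ m) (hd : ∀ i, i ≤ j → α i < m)
    (hn : n = ∑ i ∈ Finset.range (j + 1), α i * m ^ i) {r : ℕ} {β : ℕ → ℤ}
    (hp1 : r ≤ j) (hp2 : ∀ t, t = 0 ∨ r < t → β t = 0)
    (hp3 : 0 < ((n / m ^ r : ℕ) : ℤ) - β r)
    (hp4 : ∀ t, 1 ≤ t → t < r → 0 < (α t : ℤ) - β t + (m : ℤ) * β (t + 1))
    (hp5 : 0 < r → 0 < (α 0 : ℤ) + (m : ℤ) * β 1) :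
    (∀ t, r < t → Lf m n α r β t = 0) ∧
    (∀ t, t ≤ r → 0 < Lf m n α r β t) ∧
    ((Lf m n α r β r : ℤ) = ((n / m ^ r : ℕ) : ℤ) - β r) ∧
    (∀ t, 1 ≤ t → t < r → (Lf m n α r β t : ℤ) = (α t : ℤ) - β t + (m:ℤ) * β (t+1)) ∧
    (0 < r → (Lf m n α r β 0 : ℤ) = (α 0 : ℤ) + (m:ℤ) * β 1) ∧
    (∑ t ∈ Finset.range (r + 1), Lf m n α r β t * m ^ t = n) := by
  have hLr : (Lf m n α r β r : ℤ) = ((n / m ^ r : ℕ) : ℤ) - β r := by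
    rw [Lf, if_pos rfl]; exact Int.toNat_of_nonneg hp3.le
  have hLt : ∀ t, 1 ≤ t → t < r → (Lf m n α r β t : ℤ) = (α t : ℤ) - β t + (m:ℤ) * β (t+1) := by
    intro t h1 h2
    rw [Lf, if_neg (by omega), if_neg (by omega), if_neg (by omega)]
    exact Int.toNat_of_nonneg (hp4 t h1 h2).le
  have hL0 : 0 < r → (Lf m n α r β 0 : ℤ) = (α 0 : ℤ) + (m:ℤ) * β 1 := by
    intro h
    rw [Lf, if_neg (by omega), if_neg (by omega), if_pos rfl]
    exact Int.toNat_of_nonneg (hp5 h).le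
  have hz : ∀ t, r < t → Lf m n α r β t = 0 := by
    intro t h; rw [Lf, if_neg (by omega), if_pos h]
  have hpos : ∀ t, t ≤ r → 0 < Lf m n α r β t := by
    intro t ht
    rcases eq_or_lt_of_le ht with he | hlt
    · have h : (0:ℤ) < (Lf m n α r β t : ℤ) := by rw [he, hLr]; exact hp3
      exact_mod_cast h
    · rcases Nat.eq_zero_or_pos t with h0 | htp
      · subst h0
        have h : (0:ℤ) < (Lf m n α r β 0 : ℤ) := by rw [hL0 hlt]; exact hp5 hlt
        exact_mod_cast h
      · have h : (0:ℤ) < (Lf m n α r β t : ℤ) := by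
          rw [hLt t htp hlt]; exact hp4 t htp hlt
        exact_mod_cast h
  have hβ0 : β 0 = 0 := hp2 0 (Or.inl rfl)
  have hβr : β (r+1) = 0 := hp2 (r+1) (Or.inr (Nat.lt_succ_self r))
  have hmod := (div_mod hm hd hn hp1).1
  have hterm : ∀ t ∈ Finset.range (r+1), (Lf m n α r β t : ℤ) * (m:ℤ)^t =
      (if t = r then ((n / m ^ r : ℕ) : ℤ) else (α t : ℤ)) * (m:ℤ)^t
        + (β (t+1) * (m:ℤ)^(t+1) - β t * (m:ℤ)^t) := by
    intro t ht
    by_cases he : t = r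
    · subst he; rw [hLr, if_pos rfl, hβr]; ring
    · have hlt : t < r := by have := Finset.mem_range.mp ht; omega
      rcases Nat.eq_zero_or_pos t with h0 | hpos1
      · subst h0; rw [hL0 hlt, if_neg he, hβ0]; ring
      · rw [hLt t hpos1 hlt, if_neg he]; ring
  have hzsum : ∑ t ∈ Finset.range (r+1), (Lf m n α r β t : ℤ) * (m:ℤ)^t = (n:ℤ) := by
    rw [Finset.sum_congr rfl hterm, Finset.sum_add_distrib,
      Finset.sum_range_sub (fun t => β t * (m:ℤ)^t), hβr, hβ0,
      Finset.sum_range_succ, if_pos rfl]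
    have hcong : ∀ t ∈ Finset.range r,
        (if t = r then ((n / m ^ r : ℕ) : ℤ) else (α t : ℤ)) * (m:ℤ)^t
          = (α t : ℤ) * (m:ℤ)^t := by
      intro t ht; rw [if_neg (by have := Finset.mem_range.mp ht; omega)]
    rw [Finset.sum_congr rfl hcong]
    have hm2 : ((n % m ^ r : ℕ) : ℤ) = ∑ t ∈ Finset.range r, (α t : ℤ) * (m:ℤ)^t := by
      rw [hmod]; push_cast; rfl
    have hnd : ((n % m ^ r : ℕ) : ℤ) + (m:ℤ)^r * ((n / m ^ r : ℕ):ℤ) = (n:ℤ) := by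
      exact_mod_cast congrArg (Nat.cast : ℕ → ℤ) (Nat.mod_add_div n (m ^ r))
    linarith [hm2, hnd]
  have hfin : ((∑ t ∈ Finset.range (r+1), Lf m n α r β t * m ^ t : ℕ) : ℤ) = (n:ℤ) := by
    push_cast
    exact hzsum
  exact ⟨hz, hpos, hLr, hLt, hL0, by exact_mod_cast hfin⟩

end GaplessAux

open GaplessAux in
theorem gapless_unique_form (m n j : ℕ) (α : ℕ → ℕ) (hm : 2 ≤ m) (hj : 0 < α j) (hd : ∀ i, i ≤ j → α i < m)
    (hn : n = ∑ i ∈ Finset.range (j + 1), α i * m ^ i)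
    (l : ℕ → ℕ) (r : ℕ)
    (hlp : ∀ i, i ≤ r → 0 < l i) (hl0 : ∀ i, r < i → l i = 0)
    (hls : ∑ i ∈ Finset.range (r + 1), l i * m ^ i = n) :
    (r ≤ j ∧ ∃! β : ℕ → ℤ,
      (∀ t, t = 0 ∨ r < t → β t = 0) ∧
      (l r : ℤ) = ((n / m ^ r : ℕ) : ℤ) - β r ∧
      (∀ t, 1 ≤ t → t < r → (l t : ℤ) = (α t : ℤ) - β t + (m : ℤ) * β (t + 1)) ∧
      (0 < r → (l 0 : ℤ) = (α 0 : ℤ) + (m : ℤ) * β 1)) ∧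
    cm m n = Nat.card {p : ℕ × (ℕ → ℤ) //
      p.1 ≤ j ∧ (∀ t, t = 0 ∨ p.1 < t → p.2 t = 0) ∧
      0 < ((n / m ^ p.1 : ℕ) : ℤ) - p.2 p.1 ∧
      (∀ t, 1 ≤ t → t < p.1 → 0 < (α t : ℤ) - p.2 t + (m : ℤ) * p.2 (t + 1)) ∧
      (0 < p.1 → 0 < (α 0 : ℤ) + (m : ℤ) * p.2 1)} := by
  have hn0 : n ≠ 0 := by
    have h1 : 0 < m ^ j := pow_pos (by omega : 0 < m) j
    have h2 : m ^ j ≤ α j * m ^ j := Nat.le_mul_of_pos_left _ hj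
    have h3 : α j * m ^ j ≤ ∑ i ∈ Finset.range (j + 1), α i * m ^ i :=
      Finset.single_le_sum (f := fun i => α i * m ^ i) (fun i _ => Nat.zero_le _)
        (Finset.self_mem_range_succ j)
    omega
  constructor
  · have hrj : r ≤ j := r_le_j hm hd hn (hlp r le_rfl) hls
    obtain ⟨e1, e2, e3⟩ := B_spec hm hd hn hls hrj
    refine ⟨hrj, B m j α l r, ⟨B_zero l r, e1, e2, e3⟩, ?_⟩
    intro β' hβ'
    exact beta_unique hm hβ'.1 hβ'.2.2.1 hβ'.2.2.2 (B_zero l r) e2 e3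
  · rw [cm]
    refine Nat.card_congr (Equiv.ofBijective
      (fun fp => ⟨Fmap m j α fp.1, Fmap_prop hm hd hn hn0 fp.2.1 fp.2.2⟩) ⟨?_, ?_⟩)
    · rintro ⟨f1, hf1⟩ ⟨f2, hf2⟩ heq
      simp only [Subtype.mk.injEq] at heq ⊢
      have h := Prod.ext_iff.mp (congrArg Subtype.val heq)
      exact Fmap_inj hm hd hn hn0 hf1.1 hf1.2 hf2.1 hf2.2 h.1 h.2
    · rintro ⟨⟨r', β⟩, hp1, hp2, hp3, hp4, hp5⟩
      obtain ⟨hz, hposL, hLr, hLt, hL0, hsum⟩ := Lf_facts hm hd hn hp1 hp2 hp3 hp4 hp5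
      set L := Lf m n α r' β with hLdef
      set f : ℕ →₀ ℕ := Finsupp.onFinset (Finset.range (r'+1)) L
        (fun t ht => Finset.mem_range.mpr (by by_contra h; exact ht (hz t (by omega)))) with hfdef
      have hcoe : ⇑f = L := rfl
      have hsub : f.support ⊆ Finset.range (r'+1) := Finsupp.support_onFinset_subset
      have hP1 : ∑ i ∈ f.support, f i * m ^ i = n := by
        rw [← hsum]
        refine Finset.sum_subset hsub ?_
        intro x _ hx
        rw [Finsupp.notMem_support_iff.mp hx, zero_mul]
      have hP2 : ∀ i k, f i ≠ 0 → k ≤ i → f k ≠ 0 := by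
        intro i k hi hk
        have hir : i ≤ r' := by
          by_contra h
          exact hi (by rw [hcoe]; exact hz i (by omega))
        have : 0 < L k := hposL k (hk.trans hir)
        rw [hcoe]
        omega
      refine ⟨⟨f, hP1, hP2⟩, ?_⟩
      have hrmem : r' ∈ f.support := Finsupp.mem_support_iff.mpr
        (by rw [hcoe]; exact (hposL r' le_rfl).ne')
      have hrnk : rnk f = r' := by
        refine le_antisymm ?_ (le_rnk hrmem)
        have h := hsub (rnk_mem ⟨r', hrmem⟩)
        exact Nat.lt_succ_iff.mp (Finset.mem_range.mp h)
      have hls' : ∑ i ∈ Finset.range (r' + 1), f i * m ^ i = n := by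
        rw [hcoe]; exact hsum
      have hBeq : B m j α f r' = β := by
        obtain ⟨e1, e2, e3⟩ := B_spec hm hd hn hls' hp1
        refine beta_unique hm (B_zero _ _) e2 e3 hp2 ?_ ?_
        · intro t h1 h2
          rw [hcoe]
          exact hLt t h1 h2
        · intro h
          rw [hcoe]
          exact hL0 h
      apply Subtype.ext
      show Fmap m j α f = (r', β)
      rw [Fmap, hrnk, hBeq]
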